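/- Let d ≥ 3 and x0 ∈ (0,1/4). The function F(x) = f2(∑_{i=1}^d f1(x_i)) can be expressed as a three-layer ReLU neural network f_W with widths m1 = 16d and m2 = d+2, whose path-norm with bias satisfies PN_b(W) ≤ (64/x0 + 1) d² + 1 when d is even and PN_b(W) ≤ (64/x0 + 1) d² + 64d/x0 + 2 when d is odd; moreover the path-norm without bias satisfies PN_nb(W) = 32 d²/x0 when d is even and PN_nb(W) = (32 d² + 32 d)/x0 when d is odd. -/

import Mathlib

noncomputable section

/-- `ReLU(t) = max(t, 0)`. -/
def relu (t : ℝ) : ℝ := max t 0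

/-- The set `B = {-3/2, -1/2, 1/2, 3/2}` as a finset of reals. -/
def Bset : Finset ℝ := {-3/2, -1/2, 1/2, 3/2}

/-- The two-layer bump network `f1`. -/
def f1 (x0 : ℝ) (x : ℝ) : ℝ :=
  ∑ β ∈ Bset, (Real.sign β / x0) *
    (relu (x - (β - 2 * x0)) - relu (x - (β - x0)) - relu (x - (β + x0)) +
      relu (x - (β + 2 * x0)))

/-- The two-layer zig-zag network `f2` (even and odd versions). -/
def f2 (d : ℕ) (x : ℝ) : ℝ :=
  if Even d then
    1 - relu x - relu (-x) - (-1 : ℝ) ^ (d / 2) * (relu (x - d) + relu (-x - d)) -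
      2 * ∑ i ∈ Finset.Icc 1 ((d - 2) / 2),
        (-1 : ℝ) ^ i * (relu (x - 2 * i) + relu (-x - 2 * i))
  else
    x + (-1 : ℝ) ^ ((d - 1) / 2) * (-relu (x - d) + relu (-x - d)) +
      2 * ∑ i ∈ Finset.range ((d - 1) / 2),
        (-1 : ℝ) ^ i * (-relu (x - (2 * i + 1)) + relu (-x - (2 * i + 1)))

/-- The three-layer discriminator `F(x) = f2(∑_i f1(x_i))`. -/
def Fdisc (d : ℕ) (x0 : ℝ) (x : EuclideanSpace ℝ (Fin d)) : ℝ :=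
  f2 d (∑ i, f1 x0 (x i))

/-- A three-layer ReLU neural network with weights
`W = ((θ_j, b_j)_j, (W_{i,j})_{i=1..m2, j=0..m1}, (w_i)_{i=0..m2})`. -/
structure ThreeLayerNet (d : ℕ) where
  m1 : ℕ
  m2 : ℕ
  θ : Fin m1 → EuclideanSpace ℝ (Fin d)
  b : Fin m1 → ℝ
  W : Fin m2 → Fin m1 → ℝ
  W0 : Fin m2 → ℝ
  w : Fin m2 → ℝ
  w0 : ℝ

/-- The function computed by a three-layer ReLU network. -/
def ThreeLayerNet.eval {d : ℕ} (N : ThreeLayerNet d) (x : EuclideanSpace ℝ (Fin d)) : ℝ :=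
  ∑ i, N.w i * relu (∑ j, N.W i j * relu ((inner ℝ (N.θ j) x : ℝ) - N.b j) + N.W0 i) + N.w0

/-- The path-norm with bias of a three-layer ReLU network. -/
def ThreeLayerNet.pnB {d : ℕ} (N : ThreeLayerNet d) : ℝ :=
  ∑ i, |N.w i| *
    (∑ j, |N.W i j| * Real.sqrt (‖N.θ j‖ ^ 2 + (N.b j) ^ 2) + |N.W0 i|) + |N.w0|

/-- The path-norm without bias of a three-layer ReLU network. -/
def ThreeLayerNet.pnNB {d : ℕ} (N : ThreeLayerNet d) : ℝ :=
  ∑ i, |N.w i| * ∑ j, |N.W i j| * ‖N.θ j‖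

/-! ### Auxiliary material for the proof -/

namespace PN

lemma relu_eq_self {t : ℝ} (h : 0 ≤ t) : relu t = t := max_eq_left h
lemma relu_eq_zero {t : ℝ} (h : t ≤ 0) : relu t = 0 := max_eq_right h

/-! #### The bump function and `f1` -/

def G (x0 a x : ℝ) : ℝ :=
  relu (x - (a - 2 * x0)) - relu (x - (a - x0)) - relu (x - (a + x0)) +
    relu (x - (a + 2 * x0))

lemma G_nonneg {x0 : ℝ} (hx0 : 0 < x0) (a x : ℝ) : 0 ≤ G x0 a x := by
  unfold G relu
  rcases le_total (x - (a - 2*x0)) 0 with h1|h1 <;>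
  rcases le_total (x - (a - x0)) 0 with h2|h2 <;>
  rcases le_total (x - (a + x0)) 0 with h3|h3 <;>
  rcases le_total (x - (a + 2*x0)) 0 with h4|h4 <;>
  simp [max_def, h1, h2, h3, h4] <;> linarith

lemma G_le {x0 : ℝ} (hx0 : 0 < x0) (a x : ℝ) : G x0 a x ≤ x0 := by
  unfold G relu
  rcases le_total (x - (a - 2*x0)) 0 with h1|h1 <;>
  rcases le_total (x - (a - x0)) 0 with h2|h2 <;>
  rcases le_total (x - (a + x0)) 0 with h3|h3 <;>
  rcases le_total (x - (a + 2*x0)) 0 with h4|h4 <;>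
  simp [max_def, h1, h2, h3, h4] <;> linarith

lemma G_zero_left {x0 a x : ℝ} (h : x ≤ a - 2 * x0) (hx0 : 0 < x0) : G x0 a x = 0 := by
  unfold G
  rw [relu_eq_zero (by linarith), relu_eq_zero (by linarith), relu_eq_zero (by linarith),
    relu_eq_zero (by linarith)]
  ring

lemma G_zero_right {x0 a x : ℝ} (h : a + 2 * x0 ≤ x) (hx0 : 0 < x0) : G x0 a x = 0 := by
  unfold G
  rw [relu_eq_self (by linarith), relu_eq_self (by linarith), relu_eq_self (by linarith),
    relu_eq_self (by linarith)]
  ring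

lemma f1_eq_G (x0 x : ℝ) :
    f1 x0 x = (- G x0 (-3/2) x - G x0 (-1/2) x + G x0 (1/2) x + G x0 (3/2) x) / x0 := by
  unfold f1
  rw [show Bset = insert (-3/2 : ℝ) (insert (-1/2) (insert (1/2) {3/2})) from rfl]
  rw [Finset.sum_insert (by norm_num), Finset.sum_insert (by norm_num),
    Finset.sum_insert (by norm_num), Finset.sum_singleton]
  rw [Real.sign_of_neg (by norm_num : (-3/2 : ℝ) < 0),
    Real.sign_of_neg (by norm_num : (-1/2 : ℝ) < 0),
    Real.sign_of_pos (by norm_num : (0:ℝ) < 1/2),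
    Real.sign_of_pos (by norm_num : (0:ℝ) < 3/2)]
  unfold G
  ring

lemma f1_ge {x0 : ℝ} (hx0 : 0 < x0) (hx0' : x0 < 1/4) (x : ℝ) : -1 ≤ f1 x0 x := by
  rw [f1_eq_G, le_div_iff₀ hx0]
  rcases le_total x (-1) with hx|hx
  · have h2 : G x0 (-1/2) x = 0 := G_zero_left (by linarith) hx0
    have h1 : G x0 (-3/2) x ≤ x0 := G_le hx0 _ _
    have h3 : 0 ≤ G x0 (1/2) x := G_nonneg hx0 _ _
    have h4 : 0 ≤ G x0 (3/2) x := G_nonneg hx0 _ _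
    linarith
  · have h1 : G x0 (-3/2) x = 0 := G_zero_right (by linarith) hx0
    have h2 : G x0 (-1/2) x ≤ x0 := G_le hx0 _ _
    have h3 : 0 ≤ G x0 (1/2) x := G_nonneg hx0 _ _
    have h4 : 0 ≤ G x0 (3/2) x := G_nonneg hx0 _ _
    linarith

/-! #### The first-layer weights -/

def svec (x0 : ℝ) (k : ℕ) : ℝ :=
  ((if k < 8 then (-1 : ℝ) else 1) * (if k % 4 = 0 ∨ k % 4 = 3 then 1 else -1)) / x0

def bvec (x0 : ℝ) (k : ℕ) : ℝ :=
  (if k < 4 then (-3/2 : ℝ) else if k < 8 then -1/2 else if k < 12 then 1/2 else 3/2) +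
    (if k % 4 = 0 then (-2 : ℝ) else if k % 4 = 1 then -1 else if k % 4 = 2 then 1 else 2) * x0

def Bnd (k : ℕ) : ℝ := if k < 4 ∨ 12 ≤ k then 9/4 else 3/2

lemma f1_as_sum (x0 x : ℝ) :
    f1 x0 x = ∑ p : Fin 16, svec x0 p.val * relu (x - bvec x0 p.val) := by
  rw [Fin.sum_univ_eq_sum_range (fun k => svec x0 k * relu (x - bvec x0 k)) 16]
  unfold f1
  rw [show Bset = insert (-3/2 : ℝ) (insert (-1/2) (insert (1/2) {3/2})) from rfl]
  rw [Finset.sum_insert (by norm_num), Finset.sum_insert (by norm_num),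
    Finset.sum_insert (by norm_num), Finset.sum_singleton]
  rw [Real.sign_of_neg (by norm_num : (-3/2 : ℝ) < 0),
    Real.sign_of_neg (by norm_num : (-1/2 : ℝ) < 0),
    Real.sign_of_pos (by norm_num : (0:ℝ) < 1/2),
    Real.sign_of_pos (by norm_num : (0:ℝ) < 3/2)]
  norm_num [Finset.sum_range_succ, svec, bvec]
  ring_nf

lemma svec_abs {x0 : ℝ} (hx0 : 0 < x0) (k : ℕ) : |svec x0 k| = 1 / x0 := by
  unfold svec
  split_ifs <;> simp [abs_div, abs_of_pos hx0, hx0.le]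

lemma sqrt_le_of_sq {y z : ℝ} (hz : 0 ≤ z) (h : y ≤ z ^ 2) : Real.sqrt y ≤ z := by
  rw [← Real.sqrt_sq hz]
  exact Real.sqrt_le_sqrt h

lemma sqrt_bnd {x0 : ℝ} (hx0 : 0 < x0) (hx0' : x0 < 1/4) (k : ℕ) :
    Real.sqrt (1 + bvec x0 k ^ 2) ≤ Bnd k := by
  unfold bvec Bnd
  split_ifs <;>
    first
      | (exfalso; omega)
      | (apply sqrt_le_of_sq (by norm_num); nlinarith)

lemma sum_Bnd : ∑ p : Fin 16, Bnd p.val = 30 := by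
  rw [Fin.sum_univ_eq_sum_range Bnd 16]
  norm_num [Finset.sum_range_succ, Bnd]

lemma sum_sqrt_le {x0 : ℝ} (hx0 : 0 < x0) (hx0' : x0 < 1/4) :
    ∑ p : Fin 16, Real.sqrt (1 + bvec x0 p.val ^ 2) ≤ 30 := by
  calc ∑ p : Fin 16, Real.sqrt (1 + bvec x0 p.val ^ 2) ≤ ∑ p : Fin 16, Bnd p.val :=
        Finset.sum_le_sum fun p _ => sqrt_bnd hx0 hx0' p.val
    _ = 30 := sum_Bnd

/-! #### The generic network -/

def e16 (d : ℕ) : (Fin 16 × Fin d) ≃ Fin (16 * d) := finProdFinEquiv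

def mkNet (d : ℕ) (x0 : ℝ) (sig wgt cst : ℕ → ℝ) (w0 : ℝ) : ThreeLayerNet d where
  m1 := 16 * d
  m2 := d + 2
  θ := fun j => EuclideanSpace.single ((e16 d).symm j).2 1
  b := fun j => bvec x0 ((e16 d).symm j).1.val
  W := fun i j => sig i.val * svec x0 ((e16 d).symm j).1.val
  W0 := fun i => cst i.val
  w := fun i => wgt i.val
  w0 := w0

lemma sum_e16 (d : ℕ) (g : Fin 16 → Fin d → ℝ) :
    ∑ j : Fin (16 * d), g ((e16 d).symm j).1 ((e16 d).symm j).2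
      = ∑ i : Fin d, ∑ p : Fin 16, g p i := by
  rw [← Equiv.sum_comp (e16 d) (fun j => g ((e16 d).symm j).1 ((e16 d).symm j).2)]
  simp only [Equiv.symm_apply_apply]
  rw [Fintype.sum_prod_type]
  exact Finset.sum_comm

lemma mkNet_eval (d : ℕ) (x0 : ℝ) (sig wgt cst : ℕ → ℝ) (w0 : ℝ)
    (x : EuclideanSpace ℝ (Fin d)) :
    (mkNet d x0 sig wgt cst w0).eval x =
      ∑ i : Fin (d + 2),
        wgt i.val * relu (sig i.val * (∑ p : Fin 16, ∑ k : Fin d, svec x0 p.val *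
            relu (x k - bvec x0 p.val)) + cst i.val) + w0 := by
  unfold ThreeLayerNet.eval mkNet
  simp only
  congr 1
  apply Finset.sum_congr rfl
  intro i _
  congr 2
  have : ∀ j : Fin (16 * d),
      (sig i.val * svec x0 ((e16 d).symm j).1.val) *
          relu ((inner ℝ (EuclideanSpace.single ((e16 d).symm j).2 (1:ℝ)) x : ℝ)
            - bvec x0 ((e16 d).symm j).1.val)
        = sig i.val * (svec x0 ((e16 d).symm j).1.val *
            relu (x ((e16 d).symm j).2 - bvec x0 ((e16 d).symm j).1.val)) := by
    intro j
    rw [EuclideanSpace.inner_single_left]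
    simp only [map_one, one_mul]
    ring
  rw [Finset.sum_congr rfl fun j _ => this j, ← Finset.mul_sum]
  rw [sum_e16 d (fun p i' => svec x0 p.val * relu (x i' - bvec x0 p.val))]
  rw [Finset.sum_comm]

lemma mkNet_pnNB (d : ℕ) {x0 : ℝ} (hx0 : 0 < x0) (sig wgt cst : ℕ → ℝ) (w0 : ℝ)
    (hsig : ∀ n, |sig n| = 1) :
    (mkNet d x0 sig wgt cst w0).pnNB =
      (∑ i : Fin (d + 2), |wgt i.val|) * (16 * d / x0) := by
  unfold ThreeLayerNet.pnNB mkNet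
  simp only
  rw [Finset.sum_mul]
  apply Finset.sum_congr rfl
  intro i _
  have h1 : ∀ j : Fin (16 * d),
      |sig i.val * svec x0 ((e16 d).symm j).1.val| *
          ‖EuclideanSpace.single ((e16 d).symm j).2 (1:ℝ)‖ = 1 / x0 := by
    intro j
    rw [abs_mul, hsig, EuclideanSpace.norm_single]
    simp only [norm_one, mul_one, one_mul]
    exact svec_abs hx0 _
  rw [Finset.sum_congr rfl fun j _ => h1 j, Finset.sum_const, Finset.card_univ,
    Fintype.card_fin]
  push_cast
  ring

lemma mkNet_pnB_le (d : ℕ) {x0 : ℝ} (hx0 : 0 < x0) (hx0' : x0 < 1/4)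
    (sig wgt cst : ℕ → ℝ) (w0 : ℝ) (hsig : ∀ n, |sig n| = 1) :
    (mkNet d x0 sig wgt cst w0).pnB ≤
      ∑ i : Fin (d + 2), |wgt i.val| * (30 * d / x0 + |cst i.val|) + |w0| := by
  unfold ThreeLayerNet.pnB mkNet
  simp only
  have key : ∀ i : Fin (d + 2),
      (∑ j : Fin (16 * d), |sig i.val * svec x0 ((e16 d).symm j).1.val| *
        Real.sqrt (‖EuclideanSpace.single ((e16 d).symm j).2 (1:ℝ)‖ ^ 2 +
          bvec x0 ((e16 d).symm j).1.val ^ 2)) ≤ 30 * d / x0 := by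
    intro i
    have h1 : ∀ j : Fin (16 * d),
        |sig i.val * svec x0 ((e16 d).symm j).1.val| *
          Real.sqrt (‖EuclideanSpace.single ((e16 d).symm j).2 (1:ℝ)‖ ^ 2 +
            bvec x0 ((e16 d).symm j).1.val ^ 2)
        = (1 / x0) * Real.sqrt (1 + bvec x0 ((e16 d).symm j).1.val ^ 2) := by
      intro j
      rw [abs_mul, hsig, EuclideanSpace.norm_single]
      norm_num
      left
      unfold svec
      split_ifs <;> simp [abs_div, abs_of_pos hx0, hx0.le]
    rw [Finset.sum_congr rfl fun j _ => h1 j]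
    rw [sum_e16 d (fun p _ => (1 / x0) * Real.sqrt (1 + bvec x0 p.val ^ 2))]
    rw [Finset.sum_const, Finset.card_univ, Fintype.card_fin, ← Finset.mul_sum]
    have h2 : ∑ p : Fin 16, Real.sqrt (1 + bvec x0 p.val ^ 2) ≤ 30 := sum_sqrt_le hx0 hx0'
    calc d • ((1 / x0) * ∑ p : Fin 16, Real.sqrt (1 + bvec x0 p.val ^ 2))
        = (1 / x0) * (d * ∑ p : Fin 16, Real.sqrt (1 + bvec x0 p.val ^ 2)) := by
          rw [nsmul_eq_mul]; ring
      _ ≤ (1 / x0) * (d * 30) := by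
          apply mul_le_mul_of_nonneg_left _ (by positivity)
          apply mul_le_mul_of_nonneg_left h2 (by positivity)
      _ = 30 * d / x0 := by ring
  gcongr with i hi
  · exact key i

/-! #### The second-layer weights -/

def sigE (k : ℕ) : ℝ := if k % 2 = 0 then 1 else -1
def cstE (d k : ℕ) : ℝ :=
  if k < 2 then 0 else if k < 4 then -(d : ℝ) else -(2 * (((k - 2) / 2 : ℕ) : ℝ))
def wgtE (d k : ℕ) : ℝ :=
  if k < 2 then -1 else if k < 4 then -(-1 : ℝ) ^ (d / 2) else -2 * (-1 : ℝ) ^ ((k - 2) / 2)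

def sigO (k : ℕ) : ℝ := if k = 0 then 1 else if k = 1 then 1 else if k = 2 then -1
  else if (k - 3) % 2 = 0 then 1 else -1
def cstO (d k : ℕ) : ℝ := if k = 0 then (d : ℝ) else if k < 3 then -(d : ℝ)
  else -(2 * (((k - 3) / 2 : ℕ) : ℝ) + 1)
def wgtO (d k : ℕ) : ℝ := if k = 0 then 1 else if k = 1 then -(-1 : ℝ) ^ ((d - 1) / 2)
  else if k = 2 then 2 * (-1 : ℝ) ^ ((d - 1) / 2)
  else if (k - 3) % 2 = 0 then -2 * (-1 : ℝ) ^ ((k - 3) / 2) else 2 * (-1 : ℝ) ^ ((k - 3) / 2)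

lemma sigE_abs (k : ℕ) : |sigE k| = 1 := by
  unfold sigE; split_ifs <;> norm_num

lemma sigO_abs (k : ℕ) : |sigO k| = 1 := by
  unfold sigO; split_ifs <;> norm_num

lemma sum_Ico_pair (h : ℕ → ℝ) (a n : ℕ) :
    ∑ k ∈ Finset.Ico a (a + 2 * n), h k
      = ∑ i ∈ Finset.range n, (h (a + 2 * i) + h (a + 2 * i + 1)) := by
  induction n with
  | zero => simp
  | succ n ih =>
    have h2 : a + 2 * (n + 1) = (a + 2 * n + 1) + 1 := by ring
    rw [h2, Finset.sum_Ico_succ_top (by omega), Finset.sum_Ico_succ_top (by omega), ih,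
      Finset.sum_range_succ, add_assoc]

lemma evenNet_eq (d : ℕ) (he : Even d) (hd : 3 ≤ d) (t : ℝ) :
    ∑ k ∈ Finset.range (d + 2), wgtE d k * relu (sigE k * t + cstE d k) + 1 = f2 d t := by
  obtain ⟨m, hm⟩ := he
  have hm2 : 2 ≤ m := by omega
  have tail_eq : ∑ k ∈ Finset.Ico 4 (d + 2), wgtE d k * relu (sigE k * t + cstE d k)
      = -2 * ∑ i ∈ Finset.Icc 1 ((d - 2) / 2),
          (-1 : ℝ) ^ i * (relu (t - 2 * i) + relu (-t - 2 * i)) := by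
    rw [show (d - 2) / 2 = m - 1 by omega]
    rw [show Finset.Icc 1 (m - 1) = Finset.Ico 1 m by rw [← Finset.Ico_add_one_right_eq_Icc]; congr 1; omega]
    conv_rhs => rw [Finset.sum_Ico_eq_sum_range]
    rw [show d + 2 = 4 + 2 * (m - 1) by omega, sum_Ico_pair, Finset.mul_sum]
    apply Finset.sum_congr rfl
    intro i _
    rw [wgtE, if_neg (by omega), if_neg (by omega), show (4 + 2 * i - 2) / 2 = i + 1 by omega]
    rw [wgtE, if_neg (by omega), if_neg (by omega), show (4 + 2 * i + 1 - 2) / 2 = i + 1 by omega]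
    rw [sigE, if_pos (by omega), sigE, if_neg (by omega)]
    rw [cstE, if_neg (by omega), if_neg (by omega), show (4 + 2 * i - 2) / 2 = i + 1 by omega]
    rw [cstE, if_neg (by omega), if_neg (by omega), show (4 + 2 * i + 1 - 2) / 2 = i + 1 by omega]
    push_cast
    ring_nf
  rw [Finset.range_eq_Ico, ← Finset.sum_Ico_consecutive _ (by omega : 0 ≤ 4) (by omega : 4 ≤ d + 2),
    tail_eq, show Finset.Ico 0 4 = Finset.range 4 by rw [Finset.range_eq_Ico]]
  unfold f2
  rw [if_pos ⟨m, by omega⟩, show d / 2 = m by omega]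
  simp only [Finset.sum_range_succ, Finset.sum_range_zero]
  norm_num [wgtE, sigE, cstE]
  rw [show d / 2 = m by omega]
  set S := ∑ x ∈ Finset.Icc 1 ((d - 2) / 2), (-1:ℝ) ^ x * (relu (t - 2 * x) + relu (-t - 2 * x)) with hS
  ring

lemma oddNet_eq (d : ℕ) (ho : ¬ Even d) (hd : 3 ≤ d) (t : ℝ) (ht : -(d : ℝ) ≤ t) :
    ∑ k ∈ Finset.range (d + 2), wgtO d k * relu (sigO k * t + cstO d k) + (-(d:ℝ)) = f2 d t := by
  obtain ⟨m, hm⟩ := Nat.odd_iff.mpr (Nat.not_even_iff.mp ho)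
  have hm1 : 1 ≤ m := by omega
  have tail_eq : ∑ k ∈ Finset.Ico 3 (d + 2), wgtO d k * relu (sigO k * t + cstO d k)
      = 2 * ∑ i ∈ Finset.range ((d - 1) / 2),
          (-1 : ℝ) ^ i * (-relu (t - (2 * i + 1)) + relu (-t - (2 * i + 1))) := by
    rw [show (d - 1) / 2 = m by omega]
    rw [show d + 2 = 3 + 2 * m by omega, sum_Ico_pair, Finset.mul_sum]
    apply Finset.sum_congr rfl
    intro i _
    rw [wgtO, if_neg (by omega), if_neg (by omega), if_neg (by omega),
      if_pos (by omega : (3 + 2 * i - 3) % 2 = 0), show (3 + 2 * i - 3) / 2 = i by omega]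
    rw [wgtO, if_neg (by omega), if_neg (by omega), if_neg (by omega),
      if_neg (by omega : ¬ (3 + 2 * i + 1 - 3) % 2 = 0), show (3 + 2 * i + 1 - 3) / 2 = i by omega]
    rw [sigO, if_neg (by omega), if_neg (by omega), if_neg (by omega),
      if_pos (by omega : (3 + 2 * i - 3) % 2 = 0)]
    rw [sigO, if_neg (by omega), if_neg (by omega), if_neg (by omega),
      if_neg (by omega : ¬ (3 + 2 * i + 1 - 3) % 2 = 0)]
    rw [cstO, if_neg (by omega), if_neg (by omega), show (3 + 2 * i - 3) / 2 = i by omega]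
    rw [cstO, if_neg (by omega), if_neg (by omega), show (3 + 2 * i + 1 - 3) / 2 = i by omega]
    push_cast
    ring_nf
  rw [Finset.range_eq_Ico, ← Finset.sum_Ico_consecutive _ (by omega : 0 ≤ 3) (by omega : 3 ≤ d + 2),
    tail_eq, show Finset.Ico 0 3 = Finset.range 3 by rw [Finset.range_eq_Ico]]
  unfold f2
  rw [if_neg ho, show (d - 1) / 2 = m by omega]
  simp only [Finset.sum_range_succ, Finset.sum_range_zero]
  norm_num [wgtO, sigO, cstO]
  rw [show (d - 1) / 2 = m by omega]
  rw [relu_eq_self (by linarith : (0:ℝ) ≤ t + (d:ℝ)),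
    relu_eq_zero (by linarith : -t + -(d:ℝ) ≤ 0),
    relu_eq_zero (by linarith : -t - (d:ℝ) ≤ 0)]
  set S := ∑ i ∈ Finset.range m, (-1:ℝ) ^ i * (-relu (t - (2 * i + 1)) + relu (-t - (2 * i + 1))) with hS
  ring

/-! #### Weight sums and bias bounds -/

lemma sum_abs_wgtE (d : ℕ) (hd : 3 ≤ d) :
    ∑ k ∈ Finset.range (d + 2), |wgtE d k| = 2 * d := by
  rw [Finset.range_eq_Ico,
    ← Finset.sum_Ico_consecutive _ (by omega : 0 ≤ 4) (by omega : 4 ≤ d + 2),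
    show Finset.Ico 0 4 = Finset.range 4 by rw [Finset.range_eq_Ico]]
  have head : ∑ k ∈ Finset.range 4, |wgtE d k| = 4 := by
    simp [Finset.sum_range_succ, wgtE, abs_pow]
    norm_num
  have tail : ∑ k ∈ Finset.Ico 4 (d + 2), |wgtE d k| = ((d : ℝ) - 2) * 2 := by
    have hterm : ∀ k ∈ Finset.Ico 4 (d + 2), |wgtE d k| = 2 := by
      intro k hk
      rw [Finset.mem_Ico] at hk
      unfold wgtE
      rw [if_neg (by omega), if_neg (by omega), abs_mul, abs_pow]
      norm_num
    rw [Finset.sum_congr rfl hterm, Finset.sum_const, Nat.card_Ico,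
      show d + 2 - 4 = d - 2 by omega, nsmul_eq_mul, Nat.cast_sub (by omega : 2 ≤ d)]
    norm_num
  rw [head, tail]
  ring

lemma sum_abs_wgtO (d : ℕ) (hd : 3 ≤ d) :
    ∑ k ∈ Finset.range (d + 2), |wgtO d k| = 2 * d + 2 := by
  rw [Finset.range_eq_Ico,
    ← Finset.sum_Ico_consecutive _ (by omega : 0 ≤ 3) (by omega : 3 ≤ d + 2),
    show Finset.Ico 0 3 = Finset.range 3 by rw [Finset.range_eq_Ico]]
  have head : ∑ k ∈ Finset.range 3, |wgtO d k| = 4 := by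
    simp [Finset.sum_range_succ, wgtO, abs_mul, abs_pow]
    norm_num
  have tail : ∑ k ∈ Finset.Ico 3 (d + 2), |wgtO d k| = ((d : ℝ) - 1) * 2 := by
    have hterm : ∀ k ∈ Finset.Ico 3 (d + 2), |wgtO d k| = 2 := by
      intro k hk
      rw [Finset.mem_Ico] at hk
      unfold wgtO
      rw [if_neg (by omega), if_neg (by omega), if_neg (by omega)]
      split_ifs <;> (rw [abs_mul, abs_pow]; norm_num)
    rw [Finset.sum_congr rfl hterm, Finset.sum_const, Nat.card_Ico,
      show d + 2 - 3 = d - 1 by omega, nsmul_eq_mul, Nat.cast_sub (by omega : 1 ≤ d)]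
    norm_num
  rw [head, tail]
  ring

lemma cstE_abs_le (d k : ℕ) (hk : k < d + 2) (hd : 3 ≤ d) : |cstE d k| ≤ (d : ℝ) := by
  unfold cstE
  split_ifs
  · simp
  · rw [abs_neg, abs_of_nonneg (by positivity)]
  · rw [abs_neg, abs_of_nonneg (by positivity)]
    have : 2 * ((k - 2) / 2) ≤ d := by omega
    calc 2 * (((k - 2) / 2 : ℕ) : ℝ) = ((2 * ((k - 2) / 2) : ℕ) : ℝ) := by push_cast; ring
      _ ≤ (d : ℝ) := Nat.cast_le.mpr this

lemma cstO_abs_le (d k : ℕ) (hk : k < d + 2) (hd : 3 ≤ d) : |cstO d k| ≤ (d : ℝ) := by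
  unfold cstO
  split_ifs
  · rw [abs_of_nonneg (by positivity)]
  · rw [abs_neg, abs_of_nonneg (by positivity)]
  · rw [abs_neg, abs_of_nonneg (by positivity)]
    have : 2 * ((k - 3) / 2) + 1 ≤ d := by omega
    calc 2 * (((k - 3) / 2 : ℕ) : ℝ) + 1 = ((2 * ((k - 3) / 2) + 1 : ℕ) : ℝ) := by push_cast; ring
      _ ≤ (d : ℝ) := Nat.cast_le.mpr this

end PN

open PN in
theorem path_norm_F (d : ℕ) (hd : 3 ≤ d) (x0 : ℝ) (hx0 : x0 ∈ Set.Ioo (0 : ℝ) (1/4)) :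
    ∃ N : ThreeLayerNet d,
      N.m1 = 16 * d ∧ N.m2 = d + 2 ∧
      (∀ x : EuclideanSpace ℝ (Fin d), N.eval x = Fdisc d x0 x) ∧
      (Even d → N.pnB ≤ (64 / x0 + 1) * (d : ℝ) ^ 2 + 1) ∧
      (Odd d → N.pnB ≤ (64 / x0 + 1) * (d : ℝ) ^ 2 + 64 * d / x0 + 2) ∧
      (Even d → N.pnNB = 32 * (d : ℝ) ^ 2 / x0) ∧
      (Odd d → N.pnNB = (32 * (d : ℝ) ^ 2 + 32 * d) / x0) := by
  obtain ⟨hx0p, hx0lt⟩ := hx0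
  have hd3 : (3 : ℝ) ≤ (d : ℝ) := by exact_mod_cast hd
  have hu4 : (4 : ℝ) ≤ 1 / x0 := by
    rw [le_div_iff₀ hx0p]; linarith
  by_cases he : Even d
  · -- even case
    refine ⟨mkNet d x0 sigE (wgtE d) (cstE d) 1, rfl, rfl, ?_, ?_, ?_, ?_, ?_⟩
    · intro x
      rw [mkNet_eval]
      have hT : (∑ p : Fin 16, ∑ k : Fin d, svec x0 p.val * relu (x k - bvec x0 p.val))
          = ∑ k : Fin d, f1 x0 (x k) := by
        rw [Finset.sum_comm]
        exact Finset.sum_congr rfl fun k _ => (f1_as_sum x0 (x k)).symm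
      rw [hT]
      unfold Fdisc
      rw [Fin.sum_univ_eq_sum_range
        (fun k => wgtE d k * relu (sigE k * (∑ i : Fin d, f1 x0 (x i)) + cstE d k)) (d + 2)]
      exact evenNet_eq d he hd _
    · intro _
      have h1 := mkNet_pnB_le d hx0p hx0lt sigE (wgtE d) (cstE d) 1 sigE_abs
      have h2 : ∑ i : Fin (d + 2), |wgtE d i.val| * (30 * d / x0 + |cstE d i.val|)
          ≤ ∑ i : Fin (d + 2), |wgtE d i.val| * (30 * d / x0 + (d : ℝ)) := by
        apply Finset.sum_le_sum
        intro i _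
        apply mul_le_mul_of_nonneg_left _ (abs_nonneg _)
        exact (add_le_add_iff_left _).mpr (cstE_abs_le d i.val i.isLt hd)
      have h3 : ∑ i : Fin (d + 2), |wgtE d i.val| * (30 * d / x0 + (d : ℝ))
          = 2 * d * (30 * d / x0 + (d : ℝ)) := by
        rw [← Finset.sum_mul,
          Fin.sum_univ_eq_sum_range (fun k => |wgtE d k|) (d + 2), sum_abs_wgtE d hd]
      have h4 : (d : ℝ) ^ 2 ≤ 4 * (d : ℝ) ^ 2 / x0 := by
        rw [le_div_iff₀ hx0p]
        nlinarith
      have h5 : 2 * (d:ℝ) * (30 * d / x0 + (d : ℝ)) + 1 ≤ (64 / x0 + 1) * (d : ℝ) ^ 2 + 1 := by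
        have : 2 * (d:ℝ) * (30 * d / x0) = 60 * (d:ℝ)^2 / x0 := by ring
        have hexp : (64 / x0 + 1) * (d : ℝ) ^ 2 = 64 * (d:ℝ)^2 / x0 + (d:ℝ)^2 := by ring
        rw [hexp]
        have h60 : 60 * (d:ℝ)^2 / x0 + 4 * (d:ℝ)^2 / x0 = 64 * (d:ℝ)^2 / x0 := by ring
        nlinarith
      calc (mkNet d x0 sigE (wgtE d) (cstE d) 1).pnB
          ≤ ∑ i : Fin (d + 2), |wgtE d i.val| * (30 * d / x0 + |cstE d i.val|) + |(1:ℝ)| := h1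
        _ ≤ 2 * d * (30 * d / x0 + (d : ℝ)) + 1 := by rw [abs_one]; linarith [h2, h3.le, h3.ge]
        _ ≤ (64 / x0 + 1) * (d : ℝ) ^ 2 + 1 := h5
    · intro ho
      exact ((Nat.not_even_iff_odd.mpr ho) he).elim
    · intro _
      rw [mkNet_pnNB d hx0p sigE (wgtE d) (cstE d) 1 sigE_abs,
        Fin.sum_univ_eq_sum_range (fun k => |wgtE d k|) (d + 2), sum_abs_wgtE d hd]
      field_simp
      ring
    · intro ho
      exact ((Nat.not_even_iff_odd.mpr ho) he).elim
  · -- odd case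
    have hodd : Odd d := Nat.not_even_iff_odd.mp he
    refine ⟨mkNet d x0 sigO (wgtO d) (cstO d) (-(d:ℝ)), rfl, rfl, ?_, ?_, ?_, ?_, ?_⟩
    · intro x
      rw [mkNet_eval]
      have hT : (∑ p : Fin 16, ∑ k : Fin d, svec x0 p.val * relu (x k - bvec x0 p.val))
          = ∑ k : Fin d, f1 x0 (x k) := by
        rw [Finset.sum_comm]
        exact Finset.sum_congr rfl fun k _ => (f1_as_sum x0 (x k)).symm
      rw [hT]
      unfold Fdisc
      rw [Fin.sum_univ_eq_sum_range
        (fun k => wgtO d k * relu (sigO k * (∑ i : Fin d, f1 x0 (x i)) + cstO d k)) (d + 2)]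
      apply oddNet_eq d he hd
      have hb : ∀ k : Fin d, -1 ≤ f1 x0 (x k) := fun k => f1_ge hx0p hx0lt _
      calc -(d : ℝ) = ∑ _k : Fin d, (-1 : ℝ) := by
            rw [Finset.sum_const, Finset.card_univ, Fintype.card_fin, nsmul_eq_mul]; ring
        _ ≤ ∑ k : Fin d, f1 x0 (x k) := Finset.sum_le_sum fun k _ => hb k
    · intro hev
      exact (he hev).elim
    · intro _
      have h1 := mkNet_pnB_le d hx0p hx0lt sigO (wgtO d) (cstO d) (-(d:ℝ)) sigO_abs
      have h2 : ∑ i : Fin (d + 2), |wgtO d i.val| * (30 * d / x0 + |cstO d i.val|)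
          ≤ ∑ i : Fin (d + 2), |wgtO d i.val| * (30 * d / x0 + (d : ℝ)) := by
        apply Finset.sum_le_sum
        intro i _
        apply mul_le_mul_of_nonneg_left _ (abs_nonneg _)
        exact (add_le_add_iff_left _).mpr (cstO_abs_le d i.val i.isLt hd)
      have h3 : ∑ i : Fin (d + 2), |wgtO d i.val| * (30 * d / x0 + (d : ℝ))
          = (2 * d + 2) * (30 * d / x0 + (d : ℝ)) := by
        rw [← Finset.sum_mul,
          Fin.sum_univ_eq_sum_range (fun k => |wgtO d k|) (d + 2), sum_abs_wgtO d hd]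
      have habs : |(-(d:ℝ))| = (d : ℝ) := by
        rw [abs_neg, abs_of_nonneg (by positivity)]
      have h5 : (2 * (d:ℝ) + 2) * (30 * d / x0 + (d : ℝ)) + (d : ℝ)
          ≤ (64 / x0 + 1) * (d : ℝ) ^ 2 + 64 * d / x0 + 2 := by
        have hxpos : 0 < x0 := hx0p
        have e1 : (2 * (d:ℝ) + 2) * (30 * d / x0 + (d : ℝ))
            = (60 * (d:ℝ)^2 + 60 * d) / x0 + 2 * (d:ℝ)^2 + 2 * d := by
          field_simp
          ring
        have e2 : (64 / x0 + 1) * (d : ℝ) ^ 2 + 64 * d / x0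
            = (64 * (d:ℝ)^2 + 64 * d) / x0 + (d:ℝ)^2 := by
          field_simp
          ring
        rw [e1, e2]
        have key1 : (d:ℝ)^2 + 3 * d ≤ 4 * (d:ℝ)^2 + 4 * d := by nlinarith
        have key2 : 4 * (d:ℝ)^2 + 4 * d ≤ (4 * (d:ℝ)^2 + 4 * d) / x0 := by
          rw [le_div_iff₀ hx0p]
          nlinarith
        have hsplit : (64 * (d:ℝ)^2 + 64 * d) / x0
            = (60 * (d:ℝ)^2 + 60 * d) / x0 + (4 * (d:ℝ)^2 + 4 * d) / x0 := by ring
        rw [hsplit]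
        linarith
      calc (mkNet d x0 sigO (wgtO d) (cstO d) (-(d:ℝ))).pnB
          ≤ ∑ i : Fin (d + 2), |wgtO d i.val| * (30 * d / x0 + |cstO d i.val|) + |(-(d:ℝ))| := h1
        _ ≤ (2 * d + 2) * (30 * d / x0 + (d : ℝ)) + (d : ℝ) := by
            rw [habs]; linarith [h2, h3.le]
        _ ≤ (64 / x0 + 1) * (d : ℝ) ^ 2 + 64 * d / x0 + 2 := h5
    · intro hev
      exact (he hev).elim
    · intro _
      rw [mkNet_pnNB d hx0p sigO (wgtO d) (cstO d) (-(d:ℝ)) sigO_abs,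
        Fin.sum_univ_eq_sum_range (fun k => |wgtO d k|) (d + 2), sum_abs_wgtO d hd]
      field_simp
      ring

end
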